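/- arXiv:2310.18106 — 5 statements merged into one kernel-verified Lean document; each statement's English description precedes it below -/
import Mathlib

section
/- For every a > 0, the second moment of the density g_a(x) = (a/(1-x)²) e^{-a x/(1-x)} on (0,1) satisfies γ₂(a) = ∫₀¹ x² g_a(x) dx = 1 + a - a(2+a) e^a E₁(a). -/
open Real MeasureTheory Set Filter Topology

noncomputable def E1 (a : ℝ) : ℝ := ∫ t in Set.Ioi a, Real.exp (-t) / t

lemma E1_integrableOn {t : ℝ} (ht : 0 < t) :
    IntegrableOn (fun s => Real.exp (-s) / s) (Set.Ioi t) := by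
  have hg : IntegrableOn (fun s => Real.exp (-1 * s) * t⁻¹) (Set.Ioi t) :=
    (exp_neg_integrableOn_Ioi t one_pos).mul_const _
  refine hg.mono' ?_ ?_
  · exact ((Real.measurable_exp.comp measurable_neg).div measurable_id).aestronglyMeasurable
  · filter_upwards [MeasureTheory.ae_restrict_mem measurableSet_Ioi] with s hs
    have hs' : t < s := hs
    have h0 : (0:ℝ) < s := ht.trans hs'
    rw [Real.norm_eq_abs, abs_of_nonneg (by positivity)]
    rw [neg_one_mul, div_eq_mul_inv]
    gcongr

lemma E1_sub {c x : ℝ} (hc : 0 < c) (hcx : c ≤ x) :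
    E1 x = E1 c - ∫ s in c..x, Real.exp (-s) / s := by
  have hx : 0 < x := hc.trans_le hcx
  have h1 : IntegrableOn (fun s => Real.exp (-s) / s) (Set.Ioc c x) :=
    (E1_integrableOn hc).mono_set Ioc_subset_Ioi_self
  have h2 : IntegrableOn (fun s => Real.exp (-s) / s) (Set.Ioi x) := E1_integrableOn hx
  have hunion : Set.Ioc c x ∪ Set.Ioi x = Set.Ioi c := Set.Ioc_union_Ioi_eq_Ioi hcx
  have := MeasureTheory.setIntegral_union (f := fun s => Real.exp (-s) / s) (μ := volume)
    (Set.Ioc_disjoint_Ioi le_rfl) measurableSet_Ioi h1 h2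
  rw [hunion] at this
  rw [intervalIntegral.integral_of_le hcx]
  unfold E1
  rw [this]; ring

lemma E1_hasDerivAt {t : ℝ} (ht : 0 < t) :
    HasDerivAt E1 (-(Real.exp (-t) / t)) t := by
  set c := t / 2 with hc
  have hc0 : 0 < c := by positivity
  have hct : c < t := by rw [hc]; linarith
  have hint : IntervalIntegrable (fun s => Real.exp (-s) / s) volume c t := by
    apply ContinuousOn.intervalIntegrable
    apply ContinuousOn.div (by fun_prop) continuousOn_id
    intro s hs
    rw [Set.uIcc_of_le hct.le] at hs
    exact (hc0.trans_le hs.1).ne'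
  have hd : HasDerivAt (fun x => E1 c - ∫ s in c..x, Real.exp (-s) / s)
      (-(Real.exp (-t) / t)) t := by
    have h := intervalIntegral.integral_hasDerivAt_right (f := fun s => Real.exp (-s) / s)
      hint (((Real.measurable_exp.comp measurable_neg).div
        measurable_id).stronglyMeasurable.stronglyMeasurableAtFilter)
      (ContinuousAt.div (by fun_prop) continuousAt_id ht.ne')
    simpa using (h.const_sub (E1 c))
  refine hd.congr_of_eventuallyEq ?_
  filter_upwards [eventually_gt_nhds hct] with x hx
  exact E1_sub hc0 hx.le

lemma E1_nonneg {t : ℝ} (ht : 0 < t) : 0 ≤ E1 t := by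
  apply MeasureTheory.setIntegral_nonneg measurableSet_Ioi
  intro s hs
  have : 0 < s := ht.trans hs
  positivity

lemma E1_le {t : ℝ} (ht : 0 < t) : E1 t ≤ Real.exp (-t) / t := by
  have h2 : IntegrableOn (fun s => Real.exp (-1 * s) * t⁻¹) (Set.Ioi t) :=
    (exp_neg_integrableOn_Ioi t one_pos).mul_const _
  have h := MeasureTheory.setIntegral_mono_on (E1_integrableOn ht) h2 measurableSet_Ioi ?_
  · calc E1 t ≤ ∫ s in Set.Ioi t, Real.exp (-1*s) * t⁻¹ := h
      _ = (∫ s in Set.Ioi t, Real.exp (-s)) * t⁻¹ := by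
          rw [← MeasureTheory.integral_mul_const]; simp
      _ = Real.exp (-t) / t := by rw [integral_exp_neg_Ioi]; ring
  · intro s hs
    have hs' : t < s := hs
    rw [neg_one_mul, div_eq_mul_inv]
    gcongr

lemma E1_tendsto : Tendsto E1 atTop (𝓝 0) := by
  have h1 : Tendsto (fun t : ℝ => Real.exp (-t) / t) atTop (𝓝 0) := by
    have := Real.tendsto_exp_neg_atTop_nhds_zero.mul tendsto_inv_atTop_zero (f := fun t : ℝ => Real.exp (-t))
    simpa [div_eq_mul_inv] using this
  refine squeeze_zero' ?_ ?_ h1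
  · filter_upwards [eventually_gt_atTop 0] with t ht using E1_nonneg ht
  · filter_upwards [eventually_gt_atTop 0] with t ht using E1_le ht

lemma exp_div_tendsto : Tendsto (fun t : ℝ => Real.exp (-t) / t) atTop (𝓝 0) := by
  have h := Real.tendsto_exp_neg_atTop_nhds_zero.mul tendsto_inv_atTop_zero
  simpa [div_eq_mul_inv] using h

theorem gamma2_eq (a : ℝ) (ha : 0 < a) :
    ∫ x in (0:ℝ)..1, x ^ 2 * ((a / (1 - x) ^ 2) * Real.exp (-a * x / (1 - x)))
      = 1 + a - a * (2 + a) * Real.exp a * E1 a := by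
  set u : ℝ → ℝ := fun x => a / (1 - x) with hu
  set G : ℝ → ℝ := fun x => Real.exp a *
    (-(Real.exp (-u x)) - a ^ 2 * (Real.exp (-u x) / u x) + (2 * a + a ^ 2) * E1 (u x)) with hG
  set F : ℝ → ℝ := fun x => if x < 1 then G x else 0 with hF
  -- u tends to atTop as x → 1⁻
  have hutend : Tendsto u (𝓝[<] (1:ℝ)) atTop := by
    have h1 : Tendsto (fun x : ℝ => 1 - x) (𝓝[<] (1:ℝ)) (𝓝[>] 0) := by
      apply tendsto_nhdsWithin_of_tendsto_nhds_of_eventually_within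
      · have hc : Continuous (fun x : ℝ => 1 - x) := continuous_const.sub continuous_id
        have h : Tendsto (fun x : ℝ => 1 - x) (𝓝 1) (𝓝 0) := by
          simpa using hc.tendsto (1:ℝ)
        exact h.mono_left nhdsWithin_le_nhds
      · filter_upwards [self_mem_nhdsWithin] with x hx
        have : x < 1 := hx
        simpa using this
    have h2 := tendsto_inv_nhdsGT_zero.comp h1
    have h3 := h2.const_mul_atTop ha
    refine h3.congr ?_
    intro x; simp [hu, Function.comp, div_eq_mul_inv]
  -- derivative of G
  have hGderiv : ∀ x, x < 1 → HasDerivAt G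
      (x ^ 2 * ((a / (1 - x) ^ 2) * Real.exp (-a * x / (1 - x)))) x := by
    intro x hx1
    have h1x : (0:ℝ) < 1 - x := by linarith
    have hux : 0 < u x := div_pos ha h1x
    have hu' : HasDerivAt u (a / (1 - x) ^ 2) x := by
      have h1 : HasDerivAt (fun y : ℝ => 1 - y) (-1) x := (hasDerivAt_id x).const_sub 1
      have h2 := (h1.inv h1x.ne').const_mul a
      have heq : a * (- -1 / (1 - x) ^ 2) = a / (1 - x) ^ 2 := by ring
      rw [heq] at h2
      refine h2.congr_of_eventuallyEq ?_
      filter_upwards with y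
      simp [hu, div_eq_mul_inv]
    have hexp : HasDerivAt (fun y => Real.exp (-u y))
        (Real.exp (-u x) * -(a / (1 - x) ^ 2)) x := (hu'.neg).exp
    have t1 := hexp.neg
    have t2 := (hexp.div hu' hux.ne').const_mul (a ^ 2)
    have hE1 : HasDerivAt E1 (-(Real.exp (-u x) / u x)) (u x) := E1_hasDerivAt hux
    have t3' : HasDerivAt (fun y => E1 (u y))
        (-(Real.exp (-u x) / u x) * (a / (1 - x) ^ 2)) x := hE1.comp x hu'
    have total := ((t1.sub t2).add (t3'.const_mul (2 * a + a ^ 2))).const_mul (Real.exp a)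
    have hval : x ^ 2 * ((a / (1 - x) ^ 2) * Real.exp (-a * x / (1 - x)))
        = Real.exp a * (-(Real.exp (-u x) * -(a / (1 - x) ^ 2)) -
          a ^ 2 * ((Real.exp (-u x) * -(a / (1 - x) ^ 2) * u x -
            Real.exp (-u x) * (a / (1 - x) ^ 2)) / u x ^ 2) +
          (2 * a + a ^ 2) * (-(Real.exp (-u x) / u x) * (a / (1 - x) ^ 2))) := by
      have key : Real.exp (-a * x / (1 - x)) = Real.exp a * Real.exp (-u x) := by
        rw [← Real.exp_add]; congr 1
        simp only [hu]
        field_simp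
        ring
      rw [key]
      simp only [hu]
      field_simp
      ring
    rw [hval]
    exact total
  -- tendsto of the integrand to 0 at 1⁻
  have hftend : Tendsto (fun x => x ^ 2 * ((a / (1 - x) ^ 2) * Real.exp (-a * x / (1 - x))))
      (𝓝[<] (1:ℝ)) (𝓝 0) := by
    have hsq : Tendsto (fun t : ℝ => t ^ 2 * Real.exp (-t)) atTop (𝓝 0) :=
      tendsto_pow_mul_exp_neg_atTop_nhds_zero 2
    have hcomp := hsq.comp hutend
    have hx2 : Tendsto (fun x : ℝ => x ^ 2) (𝓝[<] (1:ℝ)) (𝓝 1) := by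
      have := ((continuous_pow 2).tendsto (1:ℝ)).mono_left
        (nhdsWithin_le_nhds (s := Set.Iio (1:ℝ)))
      simpa using this
    have hmul := (hx2.mul hcomp).mul_const (Real.exp a / a)
    rw [show (1:ℝ) * 0 * (Real.exp a / a) = 0 by ring] at hmul
    refine hmul.congr' ?_
    filter_upwards [self_mem_nhdsWithin] with x hx
    have hx1 : x < 1 := hx
    have h1x : (0:ℝ) < 1 - x := by linarith
    have key : Real.exp (-a * x / (1 - x)) = Real.exp a * Real.exp (-u x) := by
      rw [← Real.exp_add]; congr 1
      simp only [hu]; field_simp; ring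
    rw [key]
    simp only [Function.comp, hu]
    field_simp
  -- tendsto of G to 0 at 1⁻
  have hGtend : Tendsto G (𝓝[<] (1:ℝ)) (𝓝 0) := by
    have e1 : Tendsto (fun x => Real.exp (-u x)) (𝓝[<] (1:ℝ)) (𝓝 0) :=
      Real.tendsto_exp_neg_atTop_nhds_zero.comp hutend
    have e2 : Tendsto (fun x => Real.exp (-u x) / u x) (𝓝[<] (1:ℝ)) (𝓝 0) :=
      exp_div_tendsto.comp hutend
    have e3 : Tendsto (fun x => E1 (u x)) (𝓝[<] (1:ℝ)) (𝓝 0) := E1_tendsto.comp hutend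
    have htot := (((e1.neg.sub (e2.const_mul (a ^ 2))).add
      (e3.const_mul (2 * a + a ^ 2))).const_mul (Real.exp a))
    rw [hG]
    simpa using htot
  -- continuity of F on [0,1]
  have hFcont : ContinuousOn F (Set.Icc 0 1) := by
    intro x hx
    rcases lt_or_eq_of_le hx.2 with h1 | h1
    · have hGc : ContinuousAt G x := (hGderiv x h1).continuousAt
      have heq : F =ᶠ[𝓝 x] G := by
        filter_upwards [eventually_lt_nhds h1] with y hy
        simp [hF, hy]
      exact (hGc.congr heq.symm).continuousWithinAt
    · subst h1
      have hF1 : F 1 = 0 := by simp [hF]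
      have htF : Tendsto F (𝓝[<] (1:ℝ)) (𝓝 0) := by
        refine hGtend.congr' ?_
        filter_upwards [self_mem_nhdsWithin] with y hy
        have : y < 1 := hy
        simp [hF, this]
      have h2 : ContinuousWithinAt F (Set.Iic 1) 1 := by
        rw [← continuousWithinAt_diff_self, Set.Iic_diff_right]
        unfold ContinuousWithinAt
        rw [hF1]
        exact htF
      exact h2.mono (Set.Icc_subset_Iic_self)
  -- continuity of the integrand on [0,1]
  have hfcont : ContinuousOn
      (fun x => x ^ 2 * ((a / (1 - x) ^ 2) * Real.exp (-a * x / (1 - x)))) (Set.Icc 0 1) := by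
    intro x hx
    rcases lt_or_eq_of_le hx.2 with h1 | h1
    · have h1x : (1:ℝ) - x ≠ 0 := by intro h; nlinarith [hx.1]
      have : ContinuousAt (fun x => x ^ 2 * ((a / (1 - x) ^ 2) * Real.exp (-a * x / (1 - x)))) x := by
        apply ContinuousAt.mul (by fun_prop)
        apply ContinuousAt.mul
        · exact ContinuousAt.div continuousAt_const (by fun_prop) (by positivity)
        · apply Real.continuous_exp.continuousAt.comp
          exact ContinuousAt.div (by fun_prop) (by fun_prop) h1x
      exact this.continuousWithinAt
    · subst h1
      have hf1 : (1:ℝ) ^ 2 * ((a / (1 - 1) ^ 2) * Real.exp (-a * 1 / (1 - 1))) = 0 := by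
        norm_num
      have h2 : ContinuousWithinAt
          (fun x => x ^ 2 * ((a / (1 - x) ^ 2) * Real.exp (-a * x / (1 - x)))) (Set.Iic 1) 1 := by
        rw [← continuousWithinAt_diff_self, Set.Iic_diff_right]
        unfold ContinuousWithinAt
        beta_reduce
        rw [hf1]
        exact hftend
      exact h2.mono (Set.Icc_subset_Iic_self)
  have hfint : IntervalIntegrable
      (fun x => x ^ 2 * ((a / (1 - x) ^ 2) * Real.exp (-a * x / (1 - x)))) volume 0 1 := by
    apply ContinuousOn.intervalIntegrable
    rwa [Set.uIcc_of_le zero_le_one]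
  have hFderiv : ∀ x ∈ Set.Ioo (0:ℝ) 1, HasDerivWithinAt F
      (x ^ 2 * ((a / (1 - x) ^ 2) * Real.exp (-a * x / (1 - x)))) (Set.Ioi x) x := by
    intro x hx
    have hGd := hGderiv x hx.2
    have heq : F =ᶠ[𝓝 x] G := by
      filter_upwards [eventually_lt_nhds hx.2] with y hy
      simp [hF, hy]
    exact (hGd.congr_of_eventuallyEq heq).hasDerivWithinAt
  rw [intervalIntegral.integral_eq_sub_of_hasDeriv_right_of_le zero_le_one hFcont hFderiv hfint]
  have hF1 : F 1 = 0 := by simp [hF]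
  have hF0 : F 0 = Real.exp a *
      (-(Real.exp (-a)) - a ^ 2 * (Real.exp (-a) / a) + (2 * a + a ^ 2) * E1 a) := by
    rw [hF, hG]
    norm_num [hu]
  rw [hF1, hF0, Real.exp_neg]
  have hea : Real.exp a ≠ 0 := Real.exp_ne_zero a
  field_simp
  ring
end

section
/- The function γ₁(a) = 1 - a e^a E₁(a) is strictly decreasing on (0, ∞), with γ₁(a) → 1 as a → 0⁺ and γ₁(a) → 0 as a → ∞. -/
open Real MeasureTheory Filter

noncomputable def gamma1 (a : ℝ) : ℝ := 1 - a * Real.exp a * E1 a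

namespace Gamma1Aux

noncomputable def F (a : ℝ) : ℝ := ∫ s in Set.Ioi (0:ℝ), a * Real.exp (-s) / (a + s)

lemma gamma1_eq (a : ℝ) : gamma1 a = 1 - F a := by
  have hE : E1 a = ∫ s in Set.Ioi (0:ℝ), Real.exp (-(s + a)) / (s + a) := by
    rw [E1]
    have h := (measurePreserving_add_right volume a).setIntegral_preimage_emb
      (measurableEmbedding_addRight a) (fun t => Real.exp (-t) / t) (Set.Ioi a)
    rw [← h]
    congr 1
    ext x; simp [lt_sub_iff_add_lt]
  rw [gamma1, hE, F]
  congr 1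
  rw [← integral_const_mul]
  congr 1
  funext s
  have he : Real.exp a * Real.exp (-(s + a)) = Real.exp (-s) := by
    rw [← Real.exp_add]; congr 1; ring
  calc a * Real.exp a * (Real.exp (-(s + a)) / (s + a))
      = a * (Real.exp a * Real.exp (-(s + a))) / (s + a) := by ring
    _ = a * Real.exp (-s) / (a + s) := by rw [he, add_comm s a]

lemma expInt : IntegrableOn (fun s : ℝ => Real.exp (-s)) (Set.Ioi (0:ℝ)) := by
  have h := exp_neg_integrableOn_Ioi 0 one_pos
  simpa using h

lemma norm_le {a s : ℝ} (ha : 0 < a) (hs : 0 < s) :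
    ‖a * Real.exp (-s) / (a + s)‖ ≤ Real.exp (-s) := by
  have h1 : (0:ℝ) < a + s := by positivity
  rw [Real.norm_eq_abs, abs_div, abs_of_pos (by positivity), abs_of_pos h1, div_le_iff₀ h1]
  calc a * Real.exp (-s) ≤ (a + s) * Real.exp (-s) :=
        mul_le_mul_of_nonneg_right (by linarith) (Real.exp_nonneg _)
    _ = Real.exp (-s) * (a + s) := by ring

lemma integrableOn (a : ℝ) (ha : 0 < a) :
    IntegrableOn (fun s => a * Real.exp (-s) / (a + s)) (Set.Ioi (0:ℝ)) := by
  apply Integrable.mono' (expInt)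
  · apply ContinuousOn.aestronglyMeasurable _ measurableSet_Ioi
    apply ContinuousOn.div
    · exact (continuous_const.mul (continuous_exp.comp continuous_neg)).continuousOn
    · exact (continuous_const.add continuous_id).continuousOn
    · intro s hs
      have hs' : (0:ℝ) < s := hs
      exact ne_of_gt (by positivity : (0:ℝ) < a + s)
  · filter_upwards [ae_restrict_mem measurableSet_Ioi] with s hs
    exact norm_le ha hs

lemma F_strictMono : StrictMonoOn F (Set.Ioi 0) := by
  intro a ha b hb hab
  have ha' : (0:ℝ) < a := ha
  have hb' : (0:ℝ) < b := hb
  have hsub : F b - F a = ∫ s in Set.Ioi (0:ℝ),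
      (b * Real.exp (-s) / (b + s) - a * Real.exp (-s) / (a + s)) := by
    rw [F, F, ← integral_sub (integrableOn b hb') (integrableOn a ha')]
  have hkey : ∀ s : ℝ, 0 < s →
      b * Real.exp (-s) / (b + s) - a * Real.exp (-s) / (a + s)
        = Real.exp (-s) * (s * (b - a)) / ((b + s) * (a + s)) := by
    intro s hs
    have h1 : (0:ℝ) < a + s := by positivity
    have h2 : (0:ℝ) < b + s := by positivity
    field_simp
    ring
  have hint : IntegrableOn (fun s =>
      b * Real.exp (-s) / (b + s) - a * Real.exp (-s) / (a + s)) (Set.Ioi (0:ℝ)) :=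
    (integrableOn b hb').sub (integrableOn a ha')
  have hpos : 0 < F b - F a := by
    rw [hsub]
    refine (setIntegral_pos_iff_support_of_nonneg_ae ?_ hint).2 ?_
    · filter_upwards [ae_restrict_mem measurableSet_Ioi] with s hs
      have hs' : (0:ℝ) < s := hs
      have h1 : (0:ℝ) < a + s := by positivity
      have h2 : (0:ℝ) < b + s := by positivity
      rw [Pi.zero_apply, hkey s hs']
      exact le_of_lt (div_pos (mul_pos (Real.exp_pos _)
        (mul_pos hs' (by linarith))) (mul_pos h2 h1))
    · have hsupp : Set.Ioi (0:ℝ) ⊆ Function.support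
          (fun s => b * Real.exp (-s) / (b + s) - a * Real.exp (-s) / (a + s)) ∩
          Set.Ioi (0:ℝ) := by
        intro s hs
        have hs' : (0:ℝ) < s := hs
        refine ⟨?_, hs⟩
        have h1 : (0:ℝ) < a + s := by positivity
        have h2 : (0:ℝ) < b + s := by positivity
        simp only [Function.mem_support, hkey s hs']
        exact ne_of_gt (div_pos (mul_pos (Real.exp_pos _)
          (mul_pos hs' (by linarith))) (mul_pos h2 h1))
      calc (0 : ENNReal) < volume (Set.Ioi (0:ℝ)) := by simp [Real.volume_Ioi]
        _ ≤ _ := measure_mono hsupp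
  linarith

lemma aesm {a : ℝ} (ha : 0 < a) :
    AEStronglyMeasurable (fun s => a * Real.exp (-s) / (a + s))
      (volume.restrict (Set.Ioi (0:ℝ))) := (integrableOn a ha).aestronglyMeasurable

lemma F_tendsto_zero : Tendsto F (nhdsWithin 0 (Set.Ioi 0)) (nhds 0) := by
  have h : Tendsto (fun a => ∫ s in Set.Ioi (0:ℝ), a * Real.exp (-s) / (a + s))
      (nhdsWithin 0 (Set.Ioi 0)) (nhds (∫ s in Set.Ioi (0:ℝ), (0:ℝ))) := by
    refine tendsto_integral_filter_of_dominated_convergence (μ := volume.restrict (Set.Ioi (0:ℝ))) (fun s => Real.exp (-s)) ?_ ?_ ?_ ?_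
    · filter_upwards [self_mem_nhdsWithin] with a ha
      exact aesm ha
    · filter_upwards [self_mem_nhdsWithin] with a ha
      filter_upwards [ae_restrict_mem measurableSet_Ioi] with s hs
      exact norm_le ha hs
    · exact expInt
    · filter_upwards [ae_restrict_mem measurableSet_Ioi] with s hs
      have hs' : (0:ℝ) < s := hs
      have hc : ContinuousAt (fun a : ℝ => a * Real.exp (-s) / (a + s)) 0 := by
        apply ContinuousAt.div
        · exact (continuous_id.mul continuous_const).continuousAt
        · exact (continuous_id.add continuous_const).continuousAt
        · simp [ne_of_gt hs']
      have h2 := hc.tendsto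
      simp only [zero_mul, zero_add, zero_div] at h2
      exact h2.mono_left nhdsWithin_le_nhds
  rw [integral_zero] at h
  exact h

lemma F_tendsto_one : Tendsto F atTop (nhds 1) := by
  have h : Tendsto (fun a => ∫ s in Set.Ioi (0:ℝ), a * Real.exp (-s) / (a + s))
      atTop (nhds (∫ s in Set.Ioi (0:ℝ), Real.exp (-s))) := by
    refine tendsto_integral_filter_of_dominated_convergence (μ := volume.restrict (Set.Ioi (0:ℝ))) (fun s => Real.exp (-s)) ?_ ?_ ?_ ?_
    · filter_upwards [eventually_gt_atTop 0] with a ha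
      exact aesm ha
    · filter_upwards [eventually_gt_atTop 0] with a ha
      filter_upwards [ae_restrict_mem measurableSet_Ioi] with s hs
      exact norm_le ha hs
    · exact expInt
    · filter_upwards [ae_restrict_mem measurableSet_Ioi] with s hs
      have hs' : (0:ℝ) < s := hs
      have key : Tendsto (fun a : ℝ => a / (a + s)) atTop (nhds 1) := by
        have hcong : (fun a : ℝ => a / (a + s)) =ᶠ[atTop] fun a => 1 - s / (a + s) := by
          filter_upwards [eventually_gt_atTop 0] with a ha
          have hpos : (0:ℝ) < a + s := by positivity
          field_simp
          ring
        rw [tendsto_congr' hcong]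
        have h2 : Tendsto (fun a : ℝ => s / (a + s)) atTop (nhds 0) :=
          Tendsto.div_atTop tendsto_const_nhds
            (tendsto_atTop_add_const_right _ s tendsto_id)
        simpa using tendsto_const_nhds.sub h2
      have h3 : Tendsto (fun a : ℝ => a / (a + s) * Real.exp (-s)) atTop
          (nhds (Real.exp (-s))) := by
        simpa using key.mul (tendsto_const_nhds (x := Real.exp (-s)))
      refine h3.congr fun a => ?_
      ring
  rw [show (1:ℝ) = ∫ s in Set.Ioi (0:ℝ), Real.exp (-s) from integral_exp_neg_Ioi_zero.symm]
  exact h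

end Gamma1Aux

theorem gamma1_strictAnti_and_limits :
    StrictAntiOn gamma1 (Set.Ioi 0) ∧
    Tendsto gamma1 (nhdsWithin 0 (Set.Ioi 0)) (nhds 1) ∧
    Tendsto gamma1 atTop (nhds 0) := by
  have heq : ∀ a, gamma1 a = 1 - Gamma1Aux.F a := Gamma1Aux.gamma1_eq
  refine ⟨?_, ?_, ?_⟩
  · intro a ha b hb hab
    rw [heq, heq]
    have := Gamma1Aux.F_strictMono ha hb hab
    linarith
  · have h : Tendsto (fun a => 1 - Gamma1Aux.F a) (nhdsWithin 0 (Set.Ioi 0)) (nhds (1 - 0)) :=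
      tendsto_const_nhds.sub Gamma1Aux.F_tendsto_zero
    rw [sub_zero] at h
    exact h.congr fun a => (heq a).symm
  · have h : Tendsto (fun a => 1 - Gamma1Aux.F a) atTop (nhds (1 - 1)) :=
      tendsto_const_nhds.sub Gamma1Aux.F_tendsto_one
    rw [sub_self] at h
    exact h.congr fun a => (heq a).symm
end

section
/- For all a > 0, the exponential integral satisfies the two-sided bound (1/2) e^{-a} ln(1 + 2/a) < E₁(a) < e^{-a} ln(1 + 1/a). -/
open Real MeasureTheory

open Set Filter in
lemma half_log_lt {s : ℝ} (hs : 1 < s) : Real.log s < (s - s⁻¹) / 2 := by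
  have h0 : (0:ℝ) < s := lt_trans one_pos hs
  set g : ℝ → ℝ := fun x => (x - x⁻¹) / 2 - Real.log x with hg
  have hder : ∀ x : ℝ, 0 < x → HasDerivAt g ((1 + (x^2)⁻¹)/2 - x⁻¹) x := by
    intro x hx
    have h1 : HasDerivAt (fun y : ℝ => (y - y⁻¹)/2) ((1 + (x^2)⁻¹)/2) x := by
      have := (hasDerivAt_id x).sub (hasDerivAt_inv hx.ne')
      simpa [sub_neg_eq_add] using this.div_const 2
    exact h1.sub (Real.hasDerivAt_log hx.ne')
  have key : StrictMonoOn g (Set.Ici 1) := by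
    apply strictMonoOn_of_deriv_pos (convex_Ici 1)
    · intro x hx
      exact (hder x (lt_of_lt_of_le one_pos hx)).continuousAt.continuousWithinAt
    · intro x hx
      rw [interior_Ici] at hx
      have hx0 : (0:ℝ) < x := lt_trans one_pos hx
      rw [(hder x hx0).deriv]
      have : (1 + (x^2)⁻¹)/2 - x⁻¹ = (x-1)^2 / (2*x^2) := by field_simp; ring
      rw [this]
      exact div_pos (pow_pos (sub_pos.mpr hx) 2) (by positivity)
  have h1 : g 1 < g s := key (Set.mem_Ici.mpr (le_refl 1)) (Set.mem_Ici.mpr (le_of_lt hs)) hs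
  have : g 1 = 0 := by simp [hg]
  rw [this] at h1
  simpa [hg, sub_pos] using h1

open Set Filter in
lemma upper_pt {t : ℝ} (ht : 0 < t) :
    Real.exp (-t) / t < Real.exp (-t) * Real.log (1 + 1/t) + Real.exp (-t) * (1/(t*(t+1))) := by
  have h0 : (0:ℝ) < t + 1 := by linarith
  have hz : Real.log (t/(t+1)) < t/(t+1) - 1 := by
    apply Real.log_lt_sub_one_of_pos (by positivity)
    intro h
    rw [div_eq_one_iff_eq h0.ne'] at h
    linarith
  have heq : Real.log (1 + 1/t) = - Real.log (t/(t+1)) := by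
    rw [← Real.log_inv]
    congr 1
    field_simp
  have h1 : 1/(t+1) < Real.log (1 + 1/t) := by
    rw [heq]
    have : t/(t+1) - 1 = -(1/(t+1)) := by field_simp; ring
    linarith [hz]
  have he : 0 < Real.exp (-t) := Real.exp_pos _
  have hsplit : Real.exp (-t) / t = Real.exp (-t) * (1/(t+1)) + Real.exp (-t) * (1/(t*(t+1))) := by
    field_simp
  rw [hsplit]
  have := mul_lt_mul_of_pos_left h1 he
  linarith

open Set Filter in
lemma lower_pt {t : ℝ} (ht : 0 < t) :
    (1/2) * (Real.exp (-t) * Real.log (1 + 2/t) + Real.exp (-t) * (2/(t*(t+2)))) < Real.exp (-t) / t := by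
  have h0 : (0:ℝ) < t + 2 := by linarith
  have hs : 1 < 1 + 2/t := by
    have : 0 < 2/t := by positivity
    linarith
  have h1 := half_log_lt hs
  have heq : ((1 + 2/t) - (1 + 2/t)⁻¹)/2 = 2*(t+1)/(t*(t+2)) := by
    rw [show (1 + 2/t) = (t+2)/t by field_simp]
    rw [inv_div]
    field_simp
    ring
  rw [heq] at h1
  have he : 0 < Real.exp (-t) := Real.exp_pos _
  have hkey : (1/2) * Real.log (1 + 2/t) + 1/(t*(t+2)) < 1/t := by
    have : 2*(t+1)/(t*(t+2)) = 2 * (1/t - 1/(t*(t+2))) := by field_simp; ring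
    rw [this] at h1
    linarith
  have := mul_lt_mul_of_pos_left hkey he
  have hre : Real.exp (-t) * (1/t) = Real.exp (-t)/t := by ring
  calc (1/2) * (Real.exp (-t) * Real.log (1 + 2/t) + Real.exp (-t) * (2/(t*(t+2))))
      = Real.exp (-t) * ((1/2) * Real.log (1 + 2/t) + 1/(t*(t+2))) := by ring
    _ < Real.exp (-t) * (1/t) := this
    _ = Real.exp (-t)/t := hre

open Set Filter in
lemma deriv_aux {c : ℝ} (hc : 0 < c) {t : ℝ} (ht : 0 < t) :
    HasDerivAt (fun x : ℝ => -(Real.exp (-x) * Real.log (1 + c/x)))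
      (Real.exp (-t) * Real.log (1 + c/t) + Real.exp (-t) * (c/(t*(t+c)))) t := by
  have htc : 0 < t + c := by linarith
  have h1 : HasDerivAt (fun x : ℝ => Real.exp (-x)) (-Real.exp (-t)) t := by
    simpa [Function.comp_def] using (Real.hasDerivAt_exp (-t)).comp t ((hasDerivAt_id t).neg)
  have h2 : HasDerivAt (fun x : ℝ => 1 + c/x) (-(c/t^2)) t := by
    have := (hasDerivAt_inv ht.ne').const_mul c
    simpa [div_eq_mul_inv, mul_comm, neg_div, mul_div_assoc] using this.const_add 1
  have hpos : 0 < 1 + c/t := by positivity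
  have h3 : HasDerivAt (fun x : ℝ => Real.log (1 + c/x)) (-(c/(t*(t+c)))) t := by
    have := (Real.hasDerivAt_log hpos.ne').comp t h2
    refine this.congr_deriv ?_
    rw [show (1 + c/t) = (t+c)/t by field_simp]
    rw [inv_div]
    field_simp
  have h4 := (h1.mul h3).neg
  refine h4.congr_deriv ?_
  ring

open Set Filter in
lemma int_aux {a K : ℝ} (f : ℝ → ℝ) (hf : ContinuousOn f (Set.Ioi a))
    (hb : ∀ t ∈ Set.Ioi a, |f t| ≤ K * Real.exp (-t)) : IntegrableOn f (Set.Ioi a) := by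
  apply Integrable.mono' (g := fun t => K * Real.exp (-t))
  · have := (exp_neg_integrableOn_Ioi a one_pos).const_mul K
    simpa using this
  · exact hf.aestronglyMeasurable measurableSet_Ioi
  · rw [ae_restrict_iff' measurableSet_Ioi]
    exact Filter.Eventually.of_forall (fun t ht => by simpa using hb t ht)

open Set Filter in
lemma F'_integrable {c a : ℝ} (hc : 0 < c) (ha : 0 < a) :
    IntegrableOn
      (fun t => Real.exp (-t) * Real.log (1 + c/t) + Real.exp (-t) * (c/(t*(t+c)))) (Set.Ioi a) := by
  apply int_aux (K := Real.log (1 + c/a) + c/(a*(a+c)))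
  · intro t ht
    have ht0 : 0 < t := lt_trans ha ht
    have he : ContinuousAt (fun x : ℝ => Real.exp (-x)) t :=
      (Real.continuous_exp.comp continuous_neg).continuousAt
    have hin : ContinuousAt (fun x : ℝ => 1 + c/x) t :=
      continuousAt_const.add (continuousAt_const.div continuousAt_id ht0.ne')
    have hpos : (0:ℝ) < 1 + c/t := by positivity
    have hlog : ContinuousAt (fun x : ℝ => Real.log (1 + c/x)) t := by
      exact ContinuousAt.comp (g := Real.log) (Real.continuousAt_log hpos.ne') hin
    have hden : t * (t + c) ≠ 0 := by positivity
    have hfr : ContinuousAt (fun x : ℝ => c/(x*(x+c))) t :=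
      continuousAt_const.div (continuousAt_id.mul (continuousAt_id.add continuousAt_const)) hden
    exact ((he.mul hlog).add (he.mul hfr)).continuousWithinAt
  · intro t ht
    have ht0 : 0 < t := lt_trans ha (Set.mem_Ioi.mp ht)
    have hta : a < t := Set.mem_Ioi.mp ht
    have hlogpos : 0 ≤ Real.log (1 + c/t) := Real.log_nonneg (by
      have : 0 < c/t := by positivity
      linarith)
    have hlog_le : Real.log (1 + c/t) ≤ Real.log (1 + c/a) := by
      apply Real.log_le_log (by positivity)
      have : c/t ≤ c/a := by
        apply div_le_div_of_nonneg_left hc.le ha hta.le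
      linarith
    have hfrac_pos : 0 ≤ c/(t*(t+c)) := by positivity
    have hfrac_le : c/(t*(t+c)) ≤ c/(a*(a+c)) := by
      apply div_le_div_of_nonneg_left hc.le (by positivity)
      have h1 : a + c ≤ t + c := by linarith
      nlinarith
    have he : 0 < Real.exp (-t) := Real.exp_pos _
    rw [abs_of_nonneg (by positivity)]
    calc Real.exp (-t) * Real.log (1 + c/t) + Real.exp (-t) * (c/(t*(t+c)))
        ≤ Real.exp (-t) * Real.log (1 + c/a) + Real.exp (-t) * (c/(a*(a+c))) := by
          apply add_le_add <;> exact mul_le_mul_of_nonneg_left (by assumption) he.le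
      _ = (Real.log (1 + c/a) + c/(a*(a+c))) * Real.exp (-t) := by ring

open Set Filter in
lemma key_integral {c a : ℝ} (hc : 0 < c) (ha : 0 < a) :
    ∫ t in Set.Ioi a, (Real.exp (-t) * Real.log (1 + c/t) + Real.exp (-t) * (c/(t*(t+c))))
      = Real.exp (-a) * Real.log (1 + c/a) := by
  set F : ℝ → ℝ := fun x => -(Real.exp (-x) * Real.log (1 + c/x)) with hF
  have hcont : ContinuousWithinAt F (Set.Ici a) a :=
    (deriv_aux hc ha).continuousAt.continuousWithinAt
  have hderiv : ∀ t ∈ Set.Ioi a, HasDerivAt F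
      (Real.exp (-t) * Real.log (1 + c/t) + Real.exp (-t) * (c/(t*(t+c)))) t :=
    fun t ht => deriv_aux hc (lt_trans ha ht)
  have htend : Tendsto F atTop (nhds 0) := by
    have h1 : Tendsto (fun x : ℝ => Real.exp (-x)) atTop (nhds 0) := by
      simpa using Real.tendsto_exp_neg_atTop_nhds_zero
    have h2 : Tendsto (fun x : ℝ => Real.log (1 + c/x)) atTop (nhds 0) := by
      have : Tendsto (fun x : ℝ => 1 + c/x) atTop (nhds 1) := by
        simpa using (tendsto_const_nhds (x := (1:ℝ))).add (tendsto_const_nhds.div_atTop tendsto_id (f := fun x : ℝ => c))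
      have := (Real.continuousAt_log (by norm_num : (1:ℝ) ≠ 0)).tendsto.comp this
      simpa [Function.comp_def] using this
    have := (h1.mul h2).neg
    simpa using this
  have := integral_Ioi_of_hasDerivAt_of_tendsto hcont hderiv (F'_integrable hc ha) htend
  rw [this, hF]
  simp

open Set Filter in
lemma f_integrable {a : ℝ} (ha : 0 < a) :
    IntegrableOn (fun t => Real.exp (-t) / t) (Set.Ioi a) := by
  apply int_aux (K := 1/a)
  · intro t ht
    have ht0 : 0 < t := lt_trans ha ht
    exact ((Real.continuous_exp.comp continuous_neg).continuousAt.div continuousAt_id ht0.ne').continuousWithinAt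
  · intro t ht
    have ht0 : 0 < t := lt_trans ha (Set.mem_Ioi.mp ht)
    have hta : a < t := Set.mem_Ioi.mp ht
    have he : 0 < Real.exp (-t) := Real.exp_pos _
    rw [abs_of_nonneg (by positivity)]
    rw [div_le_iff₀ ht0] at *
    calc Real.exp (-t) = (1/a) * Real.exp (-t) * a := by field_simp
      _ ≤ 1/a * Real.exp (-t) * t := by
          apply mul_le_mul_of_nonneg_left hta.le (by positivity)

theorem E1_log_bounds (a : ℝ) (ha : 0 < a) :
    (1 / 2) * Real.exp (-a) * Real.log (1 + 2 / a) < E1 a ∧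
    E1 a < Real.exp (-a) * Real.log (1 + 1 / a) := by
  have hfint := f_integrable ha
  have hvol : (0:ENNReal) < volume (Set.Ioi a) := by simp [Real.volume_Ioi]
  constructor
  · -- lower bound
    have hG := F'_integrable (c := 2) two_pos ha
    have hGhalf : IntegrableOn
        (fun t => (1/2) * (Real.exp (-t) * Real.log (1 + 2/t) + Real.exp (-t) * (2/(t*(t+2))))) (Set.Ioi a) :=
      hG.const_mul _
    have hkey := key_integral (c := 2) two_pos ha
    have hpos : 0 < ∫ t in Set.Ioi a,
        (Real.exp (-t) / t - (1/2) * (Real.exp (-t) * Real.log (1 + 2/t) + Real.exp (-t) * (2/(t*(t+2))))) := by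
      rw [MeasureTheory.setIntegral_pos_iff_support_of_nonneg_ae]
      · apply lt_of_lt_of_le hvol
        apply measure_mono
        intro t ht
        refine ⟨?_, ht⟩
        have := lower_pt (lt_trans ha (Set.mem_Ioi.mp ht))
        simp only [Function.mem_support]
        intro h
        linarith [sub_eq_zero.mp h]
      · filter_upwards [MeasureTheory.ae_restrict_mem measurableSet_Ioi] with t ht
        have := lower_pt (lt_trans ha (Set.mem_Ioi.mp ht))
        simp only [Pi.zero_apply]
        linarith
      · exact hfint.sub hGhalf
    rw [MeasureTheory.integral_sub hfint hGhalf, MeasureTheory.integral_const_mul, hkey] at hpos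
    have : E1 a = ∫ t in Set.Ioi a, Real.exp (-t) / t := rfl
    rw [this]
    linarith
  · -- upper bound
    have hG := F'_integrable (c := 1) one_pos ha
    have hkey := key_integral (c := 1) one_pos ha
    have hpos : 0 < ∫ t in Set.Ioi a,
        ((Real.exp (-t) * Real.log (1 + 1/t) + Real.exp (-t) * (1/(t*(t+1)))) - Real.exp (-t) / t) := by
      rw [MeasureTheory.setIntegral_pos_iff_support_of_nonneg_ae]
      · apply lt_of_lt_of_le hvol
        apply measure_mono
        intro t ht
        refine ⟨?_, ht⟩
        have := upper_pt (lt_trans ha (Set.mem_Ioi.mp ht))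
        simp only [Function.mem_support]
        intro h
        linarith [sub_eq_zero.mp h]
      · filter_upwards [MeasureTheory.ae_restrict_mem measurableSet_Ioi] with t ht
        have := upper_pt (lt_trans ha (Set.mem_Ioi.mp ht))
        simp only [Pi.zero_apply]
        linarith
      · exact hG.sub hfint
    rw [MeasureTheory.integral_sub hG hfint, hkey] at hpos
    have : E1 a = ∫ t in Set.Ioi a, Real.exp (-t) / t := rfl
    rw [this]
    linarith
end

section
/- The function γ(a) = a(1+a) e^a E₁(a) - a on (0, ∞) satisfies γ(a) → 0 as a → 0⁺ and γ(a) → 0 as a → ∞, and γ(a) > 0 for all a > 0; consequently γ attains a maximum at some interior point of (0, ∞). -/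
open Real MeasureTheory Filter

noncomputable def gammaVar (a : ℝ) : ℝ := a * (1 + a) * Real.exp a * E1 a - a

open Set


lemma hd_exp (x : ℝ) : HasDerivAt (fun t : ℝ => Real.exp (-t)) (-Real.exp (-x)) x := by
  simpa [Function.comp_def] using (Real.hasDerivAt_exp (-x)).comp x ((hasDerivAt_id x).neg)

lemma hd2 (x : ℝ) : HasDerivAt (fun t : ℝ => -(t + 1) * Real.exp (-t)) (x * Real.exp (-x)) x := by
  have := ((hasDerivAt_id x).add_const 1).neg.mul (hd_exp x)
  refine this.congr_deriv ?_
  simp [id]; ring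

lemma hd3 (x : ℝ) : HasDerivAt (fun t : ℝ => -(t ^ 2 + 2 * t + 2) * Real.exp (-t))
    (x ^ 2 * Real.exp (-x)) x := by
  have h : HasDerivAt (fun t : ℝ => -(t ^ 2 + 2 * t + 2)) (-(2 * x + 2)) x := by
    have := (((hasDerivAt_pow 2 x).add ((hasDerivAt_id x).const_mul 2)).add_const 2).neg
    refine this.congr_deriv ?_
    simp
  have := h.mul (hd_exp x)
  refine this.congr_deriv ?_
  simp [id]; ring

lemma tend2 : Tendsto (fun t : ℝ => -(t + 1) * Real.exp (-t)) atTop (nhds 0) := by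
  have h1 := tendsto_pow_mul_exp_neg_atTop_nhds_zero 1
  have h0 := tendsto_pow_mul_exp_neg_atTop_nhds_zero 0
  have := (h1.add h0).neg
  simp only [neg_zero, add_zero, pow_one, pow_zero, one_mul] at this
  convert this using 2 with t
  ring

lemma tend3 : Tendsto (fun t : ℝ => -(t ^ 2 + 2 * t + 2) * Real.exp (-t)) atTop (nhds 0) := by
  have h2 := tendsto_pow_mul_exp_neg_atTop_nhds_zero 2
  have h1 := (tendsto_pow_mul_exp_neg_atTop_nhds_zero 1).const_mul 2
  have h0 := (tendsto_pow_mul_exp_neg_atTop_nhds_zero 0).const_mul 2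
  have := ((h2.add h1).add h0).neg
  simp only [neg_zero, add_zero, mul_zero, pow_one, pow_zero, mul_one] at this
  convert this using 2 with t
  ring

lemma int_t_exp {a : ℝ} (ha : 0 < a) :
    ∫ t in Ioi a, t * Real.exp (-t) = (a + 1) * Real.exp (-a) := by
  have := integral_Ioi_of_hasDerivAt_of_nonneg' (g := fun t : ℝ => -(t + 1) * Real.exp (-t))
    (fun x _ => hd2 x)
    (fun x hx => mul_nonneg (le_of_lt (ha.trans hx)) (Real.exp_pos _).le) tend2
  rw [this]; ring

lemma intOn_t_exp {a : ℝ} (ha : 0 < a) : IntegrableOn (fun t => t * Real.exp (-t)) (Ioi a) :=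
  integrableOn_Ioi_deriv_of_nonneg' (fun x _ => hd2 x)
    (fun x hx => mul_nonneg (le_of_lt (ha.trans hx)) (Real.exp_pos _).le) tend2

lemma int_t2_exp {a : ℝ} (ha : 0 < a) :
    ∫ t in Ioi a, t ^ 2 * Real.exp (-t) = (a ^ 2 + 2 * a + 2) * Real.exp (-a) := by
  have := integral_Ioi_of_hasDerivAt_of_nonneg' (a := a) (g := fun t : ℝ => -(t ^ 2 + 2 * t + 2) * Real.exp (-t))
    (fun x _ => hd3 x)
    (fun x hx => mul_nonneg (sq_nonneg x) (Real.exp_pos _).le) tend3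
  rw [this]; ring

lemma intOn_t2_exp {a : ℝ} (ha : 0 < a) : IntegrableOn (fun t => t ^ 2 * Real.exp (-t)) (Ioi a) :=
  integrableOn_Ioi_deriv_of_nonneg' (a := a) (fun x _ => hd3 x)
    (fun x hx => mul_nonneg (sq_nonneg x) (Real.exp_pos _).le) tend3

lemma int_exp (a : ℝ) : ∫ t in Ioi a, Real.exp (-t) = Real.exp (-a) :=
  integral_exp_neg_Ioi a

lemma intOn_exp {a : ℝ} : IntegrableOn (fun t => Real.exp (-t)) (Ioi a) := by
  simpa using exp_neg_integrableOn_Ioi a (by norm_num : (0:ℝ) < 1)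


lemma f_meas : Measurable (fun t : ℝ => Real.exp (-t) / t) :=
  (Real.measurable_exp.comp measurable_neg).div measurable_id

lemma intOn_f {a : ℝ} (ha : 0 < a) : IntegrableOn (fun t => Real.exp (-t) / t) (Ioi a) := by
  refine Integrable.mono' (g := fun t => Real.exp (-t) / a) ?_ f_meas.aestronglyMeasurable ?_
  · exact intOn_exp.div_const a
  · filter_upwards [ae_restrict_mem measurableSet_Ioi] with t ht
    rw [Real.norm_eq_abs, abs_div, abs_of_pos (Real.exp_pos _), abs_of_pos (ha.trans ht)]
    exact div_le_div_of_nonneg_left (Real.exp_pos _).le ha (ht.le)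

lemma E1_gt {a : ℝ} (ha : 0 < a) : Real.exp (-a) / (1 + a) < E1 a := by
  set c : ℝ := 1 + a with hc
  have hc0 : 0 < c := by positivity
  have hp : IntegrableOn (fun t => (2 / c) * Real.exp (-t) - (1 / c ^ 2) * (t * Real.exp (-t)))
      (Ioi a) := ((intOn_exp.const_mul _).sub ((intOn_t_exp ha).const_mul _))
  have hip : ∫ t in Ioi a, ((2 / c) * Real.exp (-t) - (1 / c ^ 2) * (t * Real.exp (-t)))
      = Real.exp (-a) / c := by
    rw [integral_sub (intOn_exp.const_mul _) ((intOn_t_exp ha).const_mul _),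
      integral_const_mul, integral_const_mul, int_exp, int_t_exp ha]
    field_simp
    ring
  have hdiff : 0 < ∫ t in Ioi a,
      (Real.exp (-t) / t - ((2 / c) * Real.exp (-t) - (1 / c ^ 2) * (t * Real.exp (-t)))) := by
    have hkey : ∀ t ∈ Ioi a, Real.exp (-t) / t
        - ((2 / c) * Real.exp (-t) - (1 / c ^ 2) * (t * Real.exp (-t)))
        = Real.exp (-t) * (t - c) ^ 2 / (t * c ^ 2) := by
      intro t ht
      have ht0 : (0:ℝ) < t := ha.trans ht
      field_simp
      ring
    have hint : IntegrableOn (fun t => Real.exp (-t) / t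
        - ((2 / c) * Real.exp (-t) - (1 / c ^ 2) * (t * Real.exp (-t)))) (Ioi a) :=
      (intOn_f ha).sub hp
    have hae : 0 ≤ᶠ[ae (volume.restrict (Ioi a))] fun t => Real.exp (-t) / t
        - ((2 / c) * Real.exp (-t) - (1 / c ^ 2) * (t * Real.exp (-t))) := by
      filter_upwards [ae_restrict_mem measurableSet_Ioi] with t ht
      rw [hkey t ht]
      have ht0 : (0:ℝ) < t := ha.trans ht
      positivity
    rw [setIntegral_pos_iff_support_of_nonneg_ae hae hint]
    refine lt_of_lt_of_le ?_ (measure_mono (?_ : Ioi a \ {c} ⊆ _))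
    · rw [measure_diff_null (measure_singleton c)]
      simp [Real.volume_Ioi]
    · intro t ⟨ht, htc⟩
      refine ⟨?_, ht⟩
      rw [Function.mem_support, hkey t ht]
      have ht0 : (0:ℝ) < t := ha.trans ht
      have hne : t - c ≠ 0 := sub_ne_zero.2 (by simpa using htc)
      have h2 : 0 < (t - c) ^ 2 := lt_of_le_of_ne (sq_nonneg _) (Ne.symm (pow_ne_zero 2 hne))
      exact ne_of_gt (by positivity)
  have hsub := integral_sub (intOn_f ha) hp
  rw [hip] at hsub
  rw [hsub] at hdiff
  have hE : E1 a = ∫ t in Ioi a, Real.exp (-t) / t := rfl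
  linarith

lemma E1_le_cubic {a : ℝ} (ha : 0 < a) :
    E1 a ≤ Real.exp (-a) * (1 / a - 1 / a ^ 2 + 2 / a ^ 3) := by
  have hq : IntegrableOn (fun t => (3 / a) * Real.exp (-t) - (3 / a ^ 2) * (t * Real.exp (-t))
      + (1 / a ^ 3) * (t ^ 2 * Real.exp (-t))) (Ioi a) :=
    ((intOn_exp.const_mul _).sub ((intOn_t_exp ha).const_mul _)).add
      ((intOn_t2_exp ha).const_mul _)
  have hle : E1 a ≤ ∫ t in Ioi a, ((3 / a) * Real.exp (-t) - (3 / a ^ 2) * (t * Real.exp (-t))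
      + (1 / a ^ 3) * (t ^ 2 * Real.exp (-t))) := by
    refine setIntegral_mono_on (intOn_f ha) hq measurableSet_Ioi ?_
    intro t ht
    have ht0 : (0:ℝ) < t := ha.trans ht
    have key : (3 / a) * Real.exp (-t) - (3 / a ^ 2) * (t * Real.exp (-t))
        + (1 / a ^ 3) * (t ^ 2 * Real.exp (-t)) - Real.exp (-t) / t
        = Real.exp (-t) * (t - a) ^ 3 / (a ^ 3 * t) := by
      field_simp
      ring
    have h3 : 0 ≤ (t - a) ^ 3 := pow_nonneg (by linarith [le_of_lt (Set.mem_Ioi.mp ht)]) 3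
    nlinarith [Real.exp_pos (-t), mul_pos (pow_pos ha 3) ht0,
      div_nonneg (mul_nonneg (Real.exp_pos (-t)).le h3) (mul_pos (pow_pos ha 3) ht0).le,
      key]
  have hval : ∫ t in Ioi a, ((3 / a) * Real.exp (-t) - (3 / a ^ 2) * (t * Real.exp (-t))
      + (1 / a ^ 3) * (t ^ 2 * Real.exp (-t)))
      = Real.exp (-a) * (1 / a - 1 / a ^ 2 + 2 / a ^ 3) := by
    have h1 : IntegrableOn (fun t : ℝ => 3 / a * Real.exp (-t) - 3 / a ^ 2 * (t * Real.exp (-t)))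
        (Ioi a) := (intOn_exp.const_mul _).sub ((intOn_t_exp ha).const_mul _)
    have h2 : IntegrableOn (fun t : ℝ => 1 / a ^ 3 * (t ^ 2 * Real.exp (-t))) (Ioi a) :=
      (intOn_t2_exp ha).const_mul _
    have h3 : IntegrableOn (fun t : ℝ => 3 / a * Real.exp (-t)) (Ioi a) := intOn_exp.const_mul _
    have h4 : IntegrableOn (fun t : ℝ => 3 / a ^ 2 * (t * Real.exp (-t))) (Ioi a) :=
      (intOn_t_exp ha).const_mul _
    rw [integral_add h1 h2, integral_sub h3 h4,
      integral_const_mul, integral_const_mul, integral_const_mul, int_exp, int_t_exp ha,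
      int_t2_exp ha]
    field_simp
    ring
  linarith

lemma E1_split {a b : ℝ} (ha : 0 < a) (hab : a ≤ b) :
    E1 a = (∫ t in Ioc a b, Real.exp (-t) / t) + E1 b := by
  have hb : 0 < b := lt_of_lt_of_le ha hab
  have h1 : IntegrableOn (fun t => Real.exp (-t) / t) (Ioc a b) :=
    (intOn_f ha).mono_set Ioc_subset_Ioi_self
  have h2 : IntegrableOn (fun t => Real.exp (-t) / t) (Ioi b) := intOn_f hb
  have hd : Disjoint (Ioc a b) (Ioi b) := Ioc_disjoint_Ioi le_rfl
  rw [E1, E1, ← Ioc_union_Ioi_eq_Ioi hab, setIntegral_union hd measurableSet_Ioi h1 h2]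

lemma E1_le_log {a : ℝ} (ha : 0 < a) (ha1 : a ≤ 1) : E1 a ≤ E1 1 - Real.log a := by
  rw [E1_split ha ha1]
  have h1 : IntegrableOn (fun t => Real.exp (-t) / t) (Ioc a 1) :=
    (intOn_f ha).mono_set Ioc_subset_Ioi_self
  have hmem : ∀ x : ℝ, x ∈ Set.uIcc a 1 → x ≠ 0 := by
    intro x hx
    rw [Set.uIcc_of_le ha1] at hx
    exact ne_of_gt (lt_of_lt_of_le ha hx.1)
  have h2 : IntegrableOn (fun t : ℝ => 1 / t) (Ioc a 1) := by
    have : IntervalIntegrable (fun t : ℝ => 1 / t) volume a 1 :=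
      intervalIntegral.intervalIntegrable_one_div hmem (continuousOn_id)
    simpa [intervalIntegrable_iff_integrableOn_Ioc_of_le ha1] using this
  have hle : (∫ t in Ioc a 1, Real.exp (-t) / t) ≤ ∫ t in Ioc a 1, (1:ℝ) / t := by
    refine setIntegral_mono_on h1 h2 measurableSet_Ioc ?_
    intro t ht
    have ht0 : 0 < t := ha.trans ht.1
    have hexp : Real.exp (-t) ≤ 1 := Real.exp_le_one_iff.2 (by linarith)
    gcongr
  have hval : (∫ t in Ioc a 1, (1:ℝ) / t) = -Real.log a := by
    have h0 : (0:ℝ) ∉ Set.uIcc a 1 := by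
      rw [Set.uIcc_of_le ha1]
      rintro ⟨h, -⟩
      linarith
    rw [← intervalIntegral.integral_of_le ha1, integral_one_div h0, one_div, Real.log_inv]
  linarith

lemma E1_eq_sub {a : ℝ} (ha : 0 < a) :
    E1 a = E1 1 - ∫ t in (1:ℝ)..a, Real.exp (-t) / t := by
  rcases le_or_gt a 1 with h | h
  · rw [E1_split ha h, intervalIntegral.integral_symm,
      intervalIntegral.integral_of_le h]
    ring
  · rw [E1_split one_pos h.le, intervalIntegral.integral_of_le h.le]
    ring

lemma E1_continuousAt {a : ℝ} (ha : 0 < a) : ContinuousAt E1 a := by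
  have hInt : IntervalIntegrable (fun t => Real.exp (-t) / t) volume 1 a := by
    apply ContinuousOn.intervalIntegrable
    intro x hx
    have hx0 : x ≠ 0 := by
      rcases Set.mem_uIcc.1 hx with ⟨h1, _⟩ | ⟨h1, _⟩
      · exact ne_of_gt (lt_of_lt_of_le one_pos h1)
      · exact ne_of_gt (lt_of_lt_of_le ha h1)
    exact ((Real.continuous_exp.comp continuous_neg).continuousWithinAt).div
      continuousWithinAt_id hx0
  have hderiv : HasDerivAt (fun u => ∫ t in (1:ℝ)..u, Real.exp (-t) / t)
      (Real.exp (-a) / a) a := by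
    refine intervalIntegral.integral_hasDerivAt_right hInt
      (f_meas.stronglyMeasurable.stronglyMeasurableAtFilter) ?_
    exact ContinuousAt.div ((Real.continuous_exp.comp continuous_neg).continuousAt)
      continuousAt_id (ne_of_gt ha)
  have hcont : ContinuousAt (fun u => E1 1 - ∫ t in (1:ℝ)..u, Real.exp (-t) / t) a :=
    (continuousAt_const.sub hderiv.continuousAt)
  refine hcont.congr ?_
  filter_upwards [eventually_gt_nhds ha] with x hx
  exact (E1_eq_sub hx).symm

lemma gammaVar_pos {a : ℝ} (ha : 0 < a) : 0 < gammaVar a := by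
  have h := E1_gt ha
  have h1a : (0:ℝ) < 1 + a := by linarith
  have key : a * (1 + a) * Real.exp a * (Real.exp (-a) / (1 + a))
      < a * (1 + a) * Real.exp a * E1 a := by
    apply mul_lt_mul_of_pos_left h
    positivity
  have hexp : Real.exp a * Real.exp (-a) = 1 := by
    rw [← Real.exp_add]; simp
  have : a * (1 + a) * Real.exp a * (Real.exp (-a) / (1 + a)) = a := by
    have h2 : a * (1 + a) * Real.exp a * (Real.exp (-a) / (1 + a))
        = a * (Real.exp a * Real.exp (-a)) := by
      field_simp
    rw [h2, hexp, mul_one]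
  rw [gammaVar]
  linarith

lemma gammaVar_le {a : ℝ} (ha : 0 < a) : gammaVar a ≤ 1 / a + 2 / a ^ 2 := by
  have h := E1_le_cubic ha
  have key : a * (1 + a) * Real.exp a * E1 a
      ≤ a * (1 + a) * Real.exp a * (Real.exp (-a) * (1 / a - 1 / a ^ 2 + 2 / a ^ 3)) := by
    apply mul_le_mul_of_nonneg_left h
    positivity
  have heq : a * (1 + a) * Real.exp a * (Real.exp (-a) * (1 / a - 1 / a ^ 2 + 2 / a ^ 3))
      = a + 1 / a + 2 / a ^ 2 := by
    have hexp : Real.exp a * Real.exp (-a) = 1 := by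
      rw [← Real.exp_add]; simp
    have h2 : a * (1 + a) * Real.exp a * (Real.exp (-a) * (1 / a - 1 / a ^ 2 + 2 / a ^ 3))
        = a * (1 + a) * (1 / a - 1 / a ^ 2 + 2 / a ^ 3) * (Real.exp a * Real.exp (-a)) := by
      ring
    rw [h2, hexp, mul_one]
    field_simp
    ring
  rw [gammaVar]
  linarith

lemma gammaVar_continuousAt {a : ℝ} (ha : 0 < a) : ContinuousAt gammaVar a := by
  unfold gammaVar
  exact ((((continuousAt_id.mul (continuousAt_const.add continuousAt_id)).mul
    (Real.continuous_exp.continuousAt)).mul (E1_continuousAt ha)).sub continuousAt_id)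

lemma tendsto_zero_right : Tendsto gammaVar (nhdsWithin 0 (Set.Ioi 0)) (nhds 0) := by
  have hlogmul : Tendsto (fun a : ℝ => Real.log a * a) (nhdsWithin 0 (Set.Ioi 0)) (nhds 0) := by
    have := tendsto_log_mul_rpow_nhdsGT_zero (r := 1) one_pos
    refine this.congr' ?_
    filter_upwards [self_mem_nhdsWithin] with x hx
    rw [Real.rpow_one]
  have hU : Tendsto (fun a : ℝ => a * (1 + a) * Real.exp a * (E1 1 - Real.log a) - a)
      (nhdsWithin 0 (Set.Ioi 0)) (nhds 0) := by
    have h1 : Tendsto (fun a : ℝ => (1 + a) * Real.exp a) (nhdsWithin 0 (Set.Ioi 0)) (nhds 1) := by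
      have : ContinuousAt (fun a : ℝ => (1 + a) * Real.exp a) 0 :=
        (continuousAt_const.add continuousAt_id).mul Real.continuous_exp.continuousAt
      have h1' : Tendsto (fun a : ℝ => (1 + a) * Real.exp a)
          (nhdsWithin 0 (Set.Ioi 0)) (nhds ((1 + 0) * Real.exp 0)) :=
        this.tendsto.mono_left nhdsWithin_le_nhds
      simpa using h1'
    have h2 : Tendsto (fun a : ℝ => a * E1 1 - Real.log a * a)
        (nhdsWithin 0 (Set.Ioi 0)) (nhds 0) := by
      have ha : Tendsto (fun a : ℝ => a * E1 1) (nhdsWithin 0 (Set.Ioi 0)) (nhds 0) := by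
        have : ContinuousAt (fun a : ℝ => a * E1 1) 0 := continuousAt_id.mul continuousAt_const
        have ha' : Tendsto (fun a : ℝ => a * E1 1)
            (nhdsWithin 0 (Set.Ioi 0)) (nhds (0 * E1 1)) :=
          this.tendsto.mono_left nhdsWithin_le_nhds
        simpa using ha'
      simpa using ha.sub hlogmul
    have h3 : Tendsto (fun a : ℝ => id a) (nhdsWithin 0 (Set.Ioi 0)) (nhds 0) :=
      tendsto_id.mono_left nhdsWithin_le_nhds
    have := (h1.mul h2).sub h3
    simp only [one_mul, sub_zero] at this
    refine this.congr' ?_ |>.mono_right (by simp)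
    filter_upwards with x
    simp [id]
    ring
  refine tendsto_of_tendsto_of_tendsto_of_le_of_le' tendsto_const_nhds hU ?_ ?_
  · filter_upwards [self_mem_nhdsWithin] with a ha
    exact (gammaVar_pos ha).le
  · have hmem : Set.Ioo (0:ℝ) 1 ∈ nhdsWithin 0 (Set.Ioi 0) :=
      Ioo_mem_nhdsGT_of_mem (by norm_num : (0:ℝ) ∈ Set.Ico (0:ℝ) 1)
    filter_upwards [hmem] with a ha
    have h := E1_le_log ha.1 ha.2.le
    have h0 : 0 < a := ha.1
    have hc : (0:ℝ) ≤ a * (1 + a) * Real.exp a := by positivity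
    have := mul_le_mul_of_nonneg_left h hc
    unfold gammaVar
    linarith

lemma tendsto_zero_top : Tendsto gammaVar atTop (nhds 0) := by
  have hU : Tendsto (fun a : ℝ => 1 / a + 2 / a ^ 2) atTop (nhds 0) := by
    have h1 : Tendsto (fun a : ℝ => 1 / a) atTop (nhds 0) := by
      simpa [one_div] using tendsto_inv_atTop_zero (𝕜 := ℝ)
    have h2 : Tendsto (fun a : ℝ => 2 / a ^ 2) atTop (nhds 0) := by
      have hp : Tendsto (fun a : ℝ => a ^ 2) atTop atTop :=
        tendsto_pow_atTop (by norm_num)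
      have := (tendsto_inv_atTop_zero (𝕜 := ℝ)).comp hp
      have h2' := this.const_mul (2:ℝ)
      simpa [Function.comp, mul_zero, div_eq_mul_inv] using h2'
    simpa using h1.add h2
  refine tendsto_of_tendsto_of_tendsto_of_le_of_le' tendsto_const_nhds hU ?_ ?_
  · filter_upwards [eventually_gt_atTop (0:ℝ)] with a ha
    exact (gammaVar_pos ha).le
  · filter_upwards [eventually_gt_atTop (0:ℝ)] with a ha
    exact gammaVar_le ha

theorem gammaVar_limits_pos_max :
    Tendsto gammaVar (nhdsWithin 0 (Set.Ioi 0)) (nhds 0) ∧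
    Tendsto gammaVar atTop (nhds 0) ∧
    (∀ a : ℝ, 0 < a → 0 < gammaVar a) ∧
    ∃ a₀ : ℝ, 0 < a₀ ∧ ∀ a : ℝ, 0 < a → gammaVar a ≤ gammaVar a₀ := by
  refine ⟨tendsto_zero_right, tendsto_zero_top, fun a ha => gammaVar_pos ha, ?_⟩
  have hg1 : 0 < gammaVar 1 := gammaVar_pos one_pos
  have h0 : ∀ᶠ a in nhdsWithin 0 (Set.Ioi 0), gammaVar a < gammaVar 1 :=
    tendsto_zero_right.eventually_lt_const hg1
  have htop : ∀ᶠ a in atTop, gammaVar a < gammaVar 1 :=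
    tendsto_zero_top.eventually_lt_const hg1
  obtain ⟨δ, hδmem, hδ⟩ := mem_nhdsGT_iff_exists_Ioo_subset.mp h0
  have hδ0 : 0 < δ := hδmem
  obtain ⟨M, hM⟩ := eventually_atTop.mp htop
  set c : ℝ := min (δ / 2) 1 with hc
  set N : ℝ := max M 1 with hN
  have hc0 : 0 < c := lt_min (by linarith) one_pos
  have hc1 : c ≤ 1 := min_le_right _ _
  have hN1 : (1:ℝ) ≤ N := le_max_right _ _
  have hcN : c ≤ N := hc1.trans hN1
  have h1mem : (1:ℝ) ∈ Set.Icc c N := ⟨hc1, hN1⟩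
  have hcont : ContinuousOn gammaVar (Set.Icc c N) := fun x hx =>
    (gammaVar_continuousAt (lt_of_lt_of_le hc0 hx.1)).continuousWithinAt
  obtain ⟨a₀, ha₀mem, hmax⟩ :=
    isCompact_Icc.exists_isMaxOn (Set.nonempty_of_mem h1mem) hcont
  refine ⟨a₀, lt_of_lt_of_le hc0 ha₀mem.1, ?_⟩
  intro a ha
  by_cases hmem : a ∈ Set.Icc c N
  · exact hmax hmem
  · have hlt : gammaVar a < gammaVar 1 := by
      rw [Set.mem_Icc, not_and_or, not_le, not_le] at hmem
      rcases hmem with h | h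
      · have haδ : a < δ := by
          calc a < c := h
          _ ≤ δ / 2 := min_le_left _ _
          _ < δ := by linarith
        exact hδ ⟨ha, haδ⟩
      · exact hM a (le_of_lt (lt_of_le_of_lt (le_max_left M 1) h))
    exact hlt.le.trans (hmax h1mem)
end

section
/- Let ν > 0 and define V(τ) = (Θ α / s) · P · (ν e^ν E₁(ν) - ν e^{-sατ} e^{ν e^{-sατ}} E₁(ν e^{-sατ})) for constants Θ, α, s, P > 0. Then V is strictly increasing in τ ≥ 0 and V(τ) → (Θ α / s) P ν e^ν E₁(ν) as τ → ∞. -/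
open Real MeasureTheory Filter

lemma E1_shift (x : ℝ) : E1 x = ∫ v in Set.Ioi (0:ℝ), Real.exp (-(x+v)) / (x+v) := by
  unfold E1
  calc ∫ t in Set.Ioi x, Real.exp (-t) / t
      = ∫ t in Set.Ioi x, Real.exp (-t) / t ∂(Measure.map (x + ·) volume) := by
        rw [(measurePreserving_add_left volume x).map_eq]
    _ = ∫ v in (x + ·)⁻¹' Set.Ioi x, Real.exp (-(x+v)) / (x+v) :=
        (measurableEmbedding_addLeft x).setIntegral_map _ _
    _ = _ := by norm_num [Set.preimage_setOf_eq]

lemma intOn (x : ℝ) (hx : 0 < x) :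
    IntegrableOn (fun v => Real.exp (-v) * (x / (x + v))) (Set.Ioi (0:ℝ)) := by
  apply Integrable.mono (exp_neg_integrableOn_Ioi 0 one_pos)
  · apply (ContinuousOn.aestronglyMeasurable ?_ measurableSet_Ioi)
    apply ContinuousOn.mul (Real.continuous_exp.comp continuous_neg).continuousOn
    exact continuousOn_const.div (continuousOn_const.add continuousOn_id)
      (fun v hv => by have hv' : (0:ℝ) < v := hv; positivity)
  · filter_upwards [ae_restrict_mem measurableSet_Ioi] with v hv
    simp only [Set.mem_Ioi] at hv
    have h1 : x / (x + v) ≤ 1 := by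
      rw [div_le_one (by positivity)]; linarith
    have h0 : 0 ≤ x / (x + v) := by positivity
    rw [Real.norm_eq_abs, Real.norm_eq_abs, abs_of_nonneg (by positivity),
      abs_of_nonneg (Real.exp_pos _).le, neg_one_mul]
    calc Real.exp (-v) * (x/(x+v)) ≤ Real.exp (-v) * 1 :=
          mul_le_mul_of_nonneg_left h1 (le_of_lt (Real.exp_pos _))
      _ = Real.exp (-v) := mul_one _

lemma g_repr (x : ℝ) (hx : 0 < x) :
    x * Real.exp x * E1 x = ∫ v in Set.Ioi (0:ℝ), Real.exp (-v) * (x / (x + v)) := by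
  rw [E1_shift, ← integral_const_mul]
  apply setIntegral_congr_fun measurableSet_Ioi
  intro v hv
  simp only [Set.mem_Ioi] at hv
  show x * Real.exp x * (Real.exp (-(x+v)) / (x+v)) = Real.exp (-v) * (x / (x+v))
  have : Real.exp (-(x+v)) = Real.exp (-v) / Real.exp x := by
    rw [eq_div_iff (Real.exp_ne_zero _), ← Real.exp_add]; ring_nf
  rw [this]
  have hxv : x + v ≠ 0 := by positivity
  field_simp

lemma g_mono : StrictMonoOn (fun x => x * Real.exp x * E1 x) (Set.Ioi (0:ℝ)) := by
  intro x hx y hy hxy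
  simp only [Set.mem_Ioi] at hx hy
  simp only
  rw [g_repr x hx, g_repr y hy, ← sub_pos, ← integral_sub (intOn y hy) (intOn x hx)]
  have key : ∀ v ∈ Set.Ioi (0:ℝ),
      0 < Real.exp (-v) * (y / (y + v)) - Real.exp (-v) * (x / (x + v)) := by
    intro v hv
    simp only [Set.mem_Ioi] at hv
    rw [← mul_sub]
    apply mul_pos (Real.exp_pos _)
    rw [sub_pos, div_lt_div_iff₀ (by positivity) (by positivity)]
    nlinarith
  rw [setIntegral_pos_iff_support_of_nonneg_ae]
  · rw [show Function.support _ ∩ Set.Ioi 0 = Set.Ioi (0:ℝ) from ?_]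
    · simp
    · apply Set.inter_eq_right.mpr
      intro v hv
      exact Function.mem_support.mpr (ne_of_gt (key v hv))
  · filter_upwards [ae_restrict_mem measurableSet_Ioi] with v hv
    exact le_of_lt (key v hv)
  · exact (intOn y hy).sub (intOn x hx)

lemma g_tendsto {ι : Type*} {l : Filter ι} [l.IsCountablyGenerated] {X : ι → ℝ}
    (hXpos : ∀ i, 0 < X i) (hX0 : Tendsto X l (nhds 0)) :
    Tendsto (fun i => X i * Real.exp (X i) * E1 (X i)) l (nhds 0) := by
  have : ∀ i, X i * Real.exp (X i) * E1 (X i)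
      = ∫ v in Set.Ioi (0:ℝ), Real.exp (-v) * (X i / (X i + v)) :=
    fun i => g_repr _ (hXpos i)
  simp_rw [this]
  have main := tendsto_integral_filter_of_dominated_convergence
    (μ := volume.restrict (Set.Ioi (0:ℝ))) (l := l)
    (F := fun i v => Real.exp (-v) * (X i / (X i + v))) (f := fun _ => (0:ℝ))
    (fun v => Real.exp (-1 * v)) ?_ ?_ ?_ ?_
  · simpa using main
  · filter_upwards with i
    exact ((intOn (X i) (hXpos i))).aestronglyMeasurable
  · filter_upwards with i
    filter_upwards [ae_restrict_mem measurableSet_Ioi] with v hv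
    simp only [Set.mem_Ioi] at hv
    have hx := hXpos i
    have h1 : X i / (X i + v) ≤ 1 := by rw [div_le_one (by positivity)]; linarith
    have h0' : 0 ≤ X i / (X i + v) := by positivity
    rw [Real.norm_eq_abs, abs_of_nonneg (by positivity), neg_one_mul]
    calc Real.exp (-v) * (X i/(X i+v)) ≤ Real.exp (-v) * 1 :=
          mul_le_mul_of_nonneg_left h1 (le_of_lt (Real.exp_pos _))
      _ = Real.exp (-v) := mul_one _
  · exact exp_neg_integrableOn_Ioi 0 one_pos
  · filter_upwards [ae_restrict_mem measurableSet_Ioi] with v hv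
    simp only [Set.mem_Ioi] at hv
    have : Tendsto (fun i => Real.exp (-v) * (X i / (X i + v))) l
        (nhds (Real.exp (-v) * (0 / (0 + v)))) := by
      apply Tendsto.mul tendsto_const_nhds
      exact (hX0.div (hX0.add tendsto_const_nhds) (by simpa using ne_of_gt hv))
    simpa using this

theorem VG_mono_tendsto (Θ α s P ν : ℝ) (hΘ : 0 < Θ) (hα : 0 < α) (hs : 0 < s)
    (hP : 0 < P) (hν : 0 < ν) :
    StrictMonoOn
      (fun τ : ℝ => (Θ * α / s) * P *
        (ν * Real.exp ν * E1 ν -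
          ν * Real.exp (-s * α * τ) * Real.exp (ν * Real.exp (-s * α * τ)) *
            E1 (ν * Real.exp (-s * α * τ)))) (Set.Ici 0) ∧
    Tendsto
      (fun τ : ℝ => (Θ * α / s) * P *
        (ν * Real.exp ν * E1 ν -
          ν * Real.exp (-s * α * τ) * Real.exp (ν * Real.exp (-s * α * τ)) *
            E1 (ν * Real.exp (-s * α * τ)))) atTop
      (nhds ((Θ * α / s) * P * (ν * Real.exp ν * E1 ν))) := by
  have hsa : 0 < s * α := mul_pos hs hα
  have hC : 0 < Θ * α / s * P := by positivity
  set X : ℝ → ℝ := fun τ => ν * Real.exp (-s * α * τ) with hX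
  have hXpos : ∀ τ, 0 < X τ := fun τ => mul_pos hν (Real.exp_pos _)
  constructor
  · intro a _ b _ hab
    have hXab : X b < X a := by
      apply mul_lt_mul_of_pos_left _ hν
      apply Real.exp_lt_exp.mpr
      nlinarith
    have hg := g_mono (Set.mem_Ioi.mpr (hXpos b)) (Set.mem_Ioi.mpr (hXpos a)) hXab
    simp only [hX] at hg
    simp only
    apply mul_lt_mul_of_pos_left _ hC
    linarith
  · have hX0 : Tendsto X atTop (nhds 0) := by
      rw [show (0:ℝ) = ν * 0 by ring]
      apply Tendsto.const_mul
      have h1 : Tendsto (fun τ : ℝ => -s * α * τ) atTop atBot := by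
        have : Tendsto (fun τ : ℝ => s * α * τ) atTop atTop :=
          Tendsto.const_mul_atTop hsa tendsto_id
        have h2 := tendsto_neg_atTop_atBot.comp this
        have he : (fun τ : ℝ => -s * α * τ) = (fun τ : ℝ => -(s * α * τ)) := by
          funext τ; ring
        rw [he]
        exact h2
      exact Real.tendsto_exp_atBot.comp h1
    have hg0 : Tendsto (fun τ => X τ * Real.exp (X τ) * E1 (X τ)) atTop (nhds 0) :=
      g_tendsto hXpos hX0
    have h3 : Tendsto (fun τ => ν * Real.exp ν * E1 ν - X τ * Real.exp (X τ) * E1 (X τ))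
        atTop (nhds (ν * Real.exp ν * E1 ν - 0)) :=
      (tendsto_const_nhds (x := ν * Real.exp ν * E1 ν)).sub hg0
    have h4 := h3.const_mul (Θ * α / s * P)
    simpa [hX] using h4
end
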